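/- Let G=(N,E) be a connected simple graph on a finite player set N. Then the following are equivalent: (1) G preserves average convexity, i.e., for every average convex TU-game (N,v) the communication game (N,v^G) is average convex; (2) for every weight system (ω,Σ) on N with Σ = (N) the trivial ordered partition, G preserves (ω,Σ)-convexity. -/

import Mathlib

open Finset

variable {α : Type*}

noncomputable section

open scoped Classical

/-- `ω̄^S_i`: the weight of `i` if `i` belongs to the top-priority part `S̄` of `S`, else `0`.
Here the ordered partition `Σ` is encoded by the priority function `p`. -/
def wbar [DecidableEq α] (ω : α → ℝ) (p : α → ℕ) (S : Finset α) (i : α) : ℝ :=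
  if i ∈ S ∧ p i = S.sup p then ω i else 0

/-- `(ω,Σ)`-convexity of a TU-game `v`. -/
def WConvex [DecidableEq α] (ω : α → ℝ) (p : α → ℕ) (v : Finset α → ℝ) : Prop :=
  ∀ S T : Finset α, S ⊂ T →
    0 ≤ ∑ i ∈ S, wbar ω p T i * (v T - v (T.erase i) - v S + v (S.erase i))

/-- The connected component of `i` in the subgraph of `G` induced by `S`. -/
def compOf [Fintype α] (G : SimpleGraph α) (S : Finset α) (i : α) : Finset α :=
  S.filter fun j => Relation.ReflTransGen (fun a b => a ∈ S ∧ b ∈ S ∧ G.Adj a b) i j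

/-- The communication game `v^G`: `v^G(S)` is the sum of `v` over the (vertex sets of the)
connected components of the subgraph of `G` induced by `S`. -/
def commGame [Fintype α] [DecidableEq α] (G : SimpleGraph α)
    (v : Finset α → ℝ) (S : Finset α) : ℝ :=
  ∑ A ∈ S.image (compOf G S), v A

/-- `G` preserves `(ω,Σ)`-convexity. -/
def Preserves [Fintype α] [DecidableEq α] (G : SimpleGraph α)
    (ω : α → ℝ) (p : α → ℕ) : Prop :=
  ∀ v : Finset α → ℝ, v ∅ = 0 → WConvex ω p v → WConvex ω p (commGame G v)

/-- average convexity of a TU-game `v`. -/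
def AvgConvex [DecidableEq α] (v : Finset α → ℝ) : Prop :=
  ∀ S T : Finset α, S ⊂ T →
    ∑ i ∈ S, (v S - v (S.erase i)) ≤ ∑ i ∈ S, (v T - v (T.erase i))

set_option linter.unusedSectionVars false
section Aux
variable [Fintype α] [DecidableEq α]

lemma wbar_apply (ω : α → ℝ) {T : Finset α} {i : α} (hi : i ∈ T) :
    wbar ω (fun _ => 1) T i = ω i := by
  have hne : T.Nonempty := ⟨i, hi⟩
  rw [wbar, if_pos ⟨hi, by rw [Finset.sup_const hne]⟩]

lemma wsum_eq (ω : α → ℝ) {S T : Finset α} (hST : S ⊆ T) (e : α → ℝ) :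
    ∑ i ∈ S, wbar ω (fun _ => 1) T i * e i = ∑ i ∈ S, ω i * e i :=
  Finset.sum_congr rfl fun i hi => by rw [wbar_apply ω (hST hi)]

lemma avgConvex_iff_wConvex_one (v : Finset α → ℝ) :
    AvgConvex v ↔ WConvex (fun _ => (1:ℝ)) (fun _ => 1) v := by
  constructor
  · intro h S T hST
    have h2 := h S T hST
    rw [wsum_eq _ hST.subset]
    simp only [one_mul]
    have : ∑ i ∈ S, (v T - v (T.erase i) - v S + v (S.erase i)) =
        ∑ i ∈ S, (v T - v (T.erase i)) - ∑ i ∈ S, (v S - v (S.erase i)) := by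
      rw [← Finset.sum_sub_distrib]; exact Finset.sum_congr rfl fun i _ => by ring
    rw [this]; linarith
  · intro h S T hST
    have h2 := h S T hST
    rw [wsum_eq _ hST.subset] at h2
    simp only [one_mul] at h2
    have : ∑ i ∈ S, (v T - v (T.erase i) - v S + v (S.erase i)) =
        ∑ i ∈ S, (v T - v (T.erase i)) - ∑ i ∈ S, (v S - v (S.erase i)) := by
      rw [← Finset.sum_sub_distrib]; exact Finset.sum_congr rfl fun i _ => by ring
    rw [this] at h2; linarith

variable {ω : α → ℝ} {v : Finset α → ℝ}

lemma single_superadd (hω : ∀ i, 0 < ω i) (hv0 : v ∅ = 0)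
    (hW : WConvex ω (fun _ => 1) v) {j : α} {X : Finset α} (hj : j ∈ X) :
    v {j} + v (X.erase j) ≤ v X := by
  by_cases hX : X = {j}
  · subst hX
    simp [hv0]
  · have hss : ({j} : Finset α) ⊂ X :=
      (Finset.singleton_subset_iff.mpr hj).ssubset_of_ne (fun h => hX h.symm)
    have h0 := hW {j} X hss
    rw [Finset.sum_singleton, wbar_apply ω hj] at h0
    have h1 : 0 ≤ v X - v (X.erase j) - v {j} + v (({j} : Finset α).erase j) :=
      nonneg_of_mul_nonneg_right h0 (hω j)
    rw [Finset.erase_singleton, hv0] at h1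
    linarith

lemma telescope (hω : ∀ i, 0 < ω i) (hv0 : v ∅ = 0) (hW : WConvex ω (fun _ => 1) v) :
    ∀ (S X : Finset α), S ⊆ X → v S + ∑ j ∈ X \ S, v {j} ≤ v X := by
  suffices h : ∀ (n : ℕ) (S X : Finset α), S ⊆ X → (X \ S).card = n →
      v S + ∑ j ∈ X \ S, v {j} ≤ v X by
    intro S X hSX; exact h _ S X hSX rfl
  intro n
  induction n with
  | zero =>
    intro S X hSX hcard
    have : X \ S = ∅ := Finset.card_eq_zero.mp hcard
    have hXS : X = S := Finset.Subset.antisymm (by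
      intro x hx
      by_contra hxS
      exact (Finset.notMem_empty x) (this ▸ Finset.mem_sdiff.mpr ⟨hx, hxS⟩)) hSX
    rw [this, hXS]; simp
  | succ n ih =>
    intro S X hSX hcard
    obtain ⟨j, hj⟩ : (X \ S).Nonempty := Finset.card_pos.mp (by omega)
    obtain ⟨hjX, hjS⟩ := Finset.mem_sdiff.mp hj
    have h1 : S ⊆ X.erase j := Finset.subset_erase.mpr ⟨hSX, hjS⟩
    have h2 : X.erase j \ S = (X \ S).erase j := by
      ext x; simp only [Finset.mem_sdiff, Finset.mem_erase]; tauto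
    have h3 : (X.erase j \ S).card = n := by
      rw [h2, Finset.card_erase_of_mem hj, hcard]; omega
    have IH := ih S (X.erase j) h1 h3
    have hs := single_superadd hω hv0 hW hjX
    have h4 : ∑ x ∈ X \ S, v {x} = ∑ x ∈ (X \ S).erase j, v {x} + v {j} :=
      (Finset.sum_erase_add _ _ hj).symm
    rw [h4, ← h2]
    linarith
end Aux
section Comp
variable [Fintype α] [DecidableEq α] {G : SimpleGraph α}

/-- the relation used in `compOf`. -/
abbrev gRel (G : SimpleGraph α) (X : Finset α) (a b : α) : Prop :=
  a ∈ X ∧ b ∈ X ∧ G.Adj a b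

lemma gRel_symm (X : Finset α) : Symmetric (gRel G X) :=
  fun _ _ h => ⟨h.2.1, h.1, h.2.2.symm⟩

lemma compOf_eq_of {X A : Finset α} {i : α} (hA : A ⊆ X) (hi : i ∈ A)
    (hcl : ∀ a ∈ A, ∀ b ∈ X, G.Adj a b → b ∈ A)
    (hconn : ∀ b ∈ A, Relation.ReflTransGen (gRel G X) i b) :
    compOf G X i = A := by
  ext j
  rw [compOf, Finset.mem_filter]
  constructor
  · rintro ⟨hjX, hrtg⟩
    induction hrtg with
    | refl => exact hi
    | tail h1 h2 ih =>
        exact hcl _ (ih h2.1) _ h2.2.1 h2.2.2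
  · intro hj
    exact ⟨hA hj, hconn j hj⟩

lemma compOf_all {X A : Finset α} {i₀ : α} (hA : A ⊆ X) (hi₀ : i₀ ∈ A)
    (hcl : ∀ a ∈ A, ∀ b ∈ X, G.Adj a b → b ∈ A)
    (hhub : ∀ b ∈ A, Relation.ReflTransGen (gRel G X) i₀ b) :
    ∀ i ∈ A, compOf G X i = A := by
  intro i hi
  refine compOf_eq_of hA hi hcl (fun b hb => ?_)
  exact ((@Relation.ReflTransGen.symmetric _ _ ⟨gRel_symm X⟩).symm _ _ (hhub i hi)).trans (hhub b hb)

lemma commGame_eq_single {X : Finset α} (v : Finset α → ℝ) (hX : X.Nonempty)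
    (h : ∀ i ∈ X, compOf G X i = X) : commGame G v X = v X := by
  rw [commGame]
  have : X.image (compOf G X) = {X} := by
    rw [Finset.image_congr (g := fun _ => X) (fun i hi => h i hi), Finset.image_const hX]
  rw [this, Finset.sum_singleton]

lemma commGame_eq_pair {X A B : Finset α} (v : Finset α → ℝ)
    (hA : A.Nonempty) (hB : B.Nonempty) (hd : Disjoint A B) (hX : X = A ∪ B)
    (ha : ∀ i ∈ A, compOf G X i = A) (hb : ∀ i ∈ B, compOf G X i = B) :
    commGame G v X = v A + v B := by
  have hAB : A ≠ B := by
    rintro rfl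
    obtain ⟨x, hx⟩ := hA
    exact Finset.disjoint_left.mp hd hx hx
  rw [commGame]
  have : X.image (compOf G X) = {A, B} := by
    subst hX
    rw [Finset.image_union]
    rw [Finset.image_congr (g := fun _ => A) (fun i hi => ha i hi), Finset.image_const hA]
    rw [Finset.image_congr (g := fun _ => B) (fun i hi => hb i hi), Finset.image_const hB]
    rfl
  rw [this, Finset.sum_insert (by simp [hAB]), Finset.sum_singleton]

lemma commGame_empty (v : Finset α → ℝ) : commGame G v ∅ = 0 := by
  simp [commGame]

lemma commGame_complete (hc : ∀ a b : α, a ≠ b → G.Adj a b) (v : Finset α → ℝ)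
    (hv0 : v ∅ = 0) : commGame G v = v := by
  funext X
  rcases X.eq_empty_or_nonempty with rfl | hX
  · rw [commGame_empty, hv0]
  · refine commGame_eq_single v hX ?_
    intro i hi
    refine compOf_eq_of (Finset.Subset.refl X) hi (fun a _ b hb _ => hb) ?_
    intro b hb
    rcases eq_or_ne i b with rfl | hne
    · exact Relation.ReflTransGen.refl
    · exact Relation.ReflTransGen.single ⟨hi, hb, hc i b hne⟩

/-- `c` is the center of a star graph. -/
def IsStarCenter (G : SimpleGraph α) (c : α) : Prop :=
  (∀ a, a ≠ c → G.Adj c a) ∧ (∀ a b, G.Adj a b → a = c ∨ b = c)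

lemma star_compOf_mem {c : α} (hstar : IsStarCenter G c) {X : Finset α} (hc : c ∈ X)
    {i : α} (hi : i ∈ X) : compOf G X i = X := by
  refine compOf_eq_of (Finset.Subset.refl X) hi (fun a _ b hb _ => hb) ?_
  intro b hb
  rcases eq_or_ne i b with rfl | hne
  · exact Relation.ReflTransGen.refl
  rcases eq_or_ne i c with rfl | hic
  · exact Relation.ReflTransGen.single ⟨hi, hb, hstar.1 b (Ne.symm hne)⟩
  rcases eq_or_ne b c with rfl | hbc
  · exact Relation.ReflTransGen.single ⟨hi, hb, (hstar.1 i hic).symm⟩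
  · exact (Relation.ReflTransGen.single ⟨hi, hc, (hstar.1 i hic).symm⟩).tail
      ⟨hc, hb, hstar.1 b hbc⟩

lemma star_compOf_not_mem {c : α} (hstar : IsStarCenter G c) {X : Finset α} (hc : c ∉ X)
    {i : α} (hi : i ∈ X) : compOf G X i = {i} := by
  refine compOf_eq_of (Finset.singleton_subset_iff.mpr hi) (Finset.mem_singleton_self i)
    ?_ ?_
  · intro a ha b hb hadj
    rcases hstar.2 a b hadj with rfl | rfl
    · exact ((hc ((Finset.mem_singleton.mp ha).symm ▸ hi : a ∈ X))).elim
    · exact absurd hb hc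
  · intro b hb
    rw [Finset.mem_singleton.mp hb]

lemma star_commGame_mem {c : α} (hstar : IsStarCenter G c) {X : Finset α} (hc : c ∈ X)
    (v : Finset α → ℝ) : commGame G v X = v X :=
  commGame_eq_single v ⟨c, hc⟩ (fun _ hi => star_compOf_mem hstar hc hi)

lemma star_commGame_not_mem {c : α} (hstar : IsStarCenter G c) {X : Finset α} (hc : c ∉ X)
    (v : Finset α → ℝ) : commGame G v X = ∑ i ∈ X, v {i} := by
  rw [commGame]
  rw [Finset.image_congr (g := fun i => ({i} : Finset α))
    (fun i hi => star_compOf_not_mem hstar hc hi)]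
  rw [Finset.sum_image (fun a _ b _ h => Finset.singleton_injective h)]
end Comp
section Star
variable [Fintype α] [DecidableEq α] {G : SimpleGraph α}

lemma star_preserves {c : α} (hstar : IsStarCenter G c) {ω : α → ℝ}
    (hω : ∀ i, 0 < ω i) : Preserves G ω (fun _ => 1) := by
  intro v hv0 hW S T hST
  rw [wsum_eq ω hST.subset]
  by_cases hcT : c ∈ T
  · by_cases hcS : c ∈ S
    · -- c ∈ S : main case
      have hWST := hW S T hST
      rw [wsum_eq ω hST.subset] at hWST
      -- split both sums at c
      rw [← Finset.sum_erase_add _ _ hcS] at hWST ⊢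
      have hterm : ∀ i ∈ S.erase c,
          ω i * (commGame G v T - commGame G v (T.erase i) - commGame G v S +
            commGame G v (S.erase i)) =
          ω i * (v T - v (T.erase i) - v S + v (S.erase i)) := by
        intro i hi
        obtain ⟨hic, hiS⟩ := Finset.mem_erase.mp hi
        rw [star_commGame_mem hstar hcT, star_commGame_mem hstar hcS,
          star_commGame_mem hstar (Finset.mem_erase.mpr ⟨Ne.symm hic, hcT⟩),
          star_commGame_mem hstar (Finset.mem_erase.mpr ⟨Ne.symm hic, hcS⟩)]
      rw [Finset.sum_congr rfl hterm]
      -- now compare the c-terms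
      have hTe : commGame G v (T.erase c) = ∑ j ∈ T.erase c, v {j} :=
        star_commGame_not_mem hstar (Finset.notMem_erase c T) v
      have hSe : commGame G v (S.erase c) = ∑ j ∈ S.erase c, v {j} :=
        star_commGame_not_mem hstar (Finset.notMem_erase c S) v
      have hsub : S.erase c ⊆ T.erase c := Finset.erase_subset_erase c hST.subset
      have htel := telescope hω hv0 hW (S.erase c) (T.erase c) hsub
      have hdiff : ∑ j ∈ T.erase c \ S.erase c, v {j} =
          ∑ j ∈ T.erase c, v {j} - ∑ j ∈ S.erase c, v {j} :=
        Finset.sum_sdiff_eq_sub hsub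
      have hkey : 0 ≤ ω c * ((v (T.erase c) - ∑ j ∈ T.erase c, v {j}) -
          (v (S.erase c) - ∑ j ∈ S.erase c, v {j})) := by
        apply mul_nonneg (hω c).le
        rw [hdiff] at htel
        linarith
      rw [star_commGame_mem hstar hcT, star_commGame_mem hstar hcS, hTe, hSe]
      nlinarith [hkey, hWST]
    · -- c ∈ T \ S
      apply Finset.sum_nonneg
      intro i hi
      have hic : i ≠ c := fun h => hcS (h ▸ hi)
      have hiT : i ∈ T := hST.subset hi
      rw [star_commGame_mem hstar hcT,
        star_commGame_mem hstar (Finset.mem_erase.mpr ⟨Ne.symm hic, hcT⟩),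
        star_commGame_not_mem hstar hcS,
        star_commGame_not_mem hstar (fun h => hcS (Finset.mem_of_mem_erase h))]
      have hsum : ∑ j ∈ S, v {j} - ∑ j ∈ S.erase i, v {j} = v {i} := by
        rw [← Finset.sum_erase_add _ _ hi]; ring
      have hmono := single_superadd hω hv0 hW hiT
      apply mul_nonneg (hω i).le
      linarith
  · -- c ∉ T
    apply Finset.sum_nonneg
    intro i hi
    have hiT : i ∈ T := hST.subset hi
    have hcS : c ∉ S := fun h => hcT (hST.subset h)
    rw [star_commGame_not_mem hstar hcT, star_commGame_not_mem hstar hcS,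
      star_commGame_not_mem hstar (fun h => hcT (Finset.mem_of_mem_erase h)),
      star_commGame_not_mem hstar (fun h => hcS (Finset.mem_of_mem_erase h))]
    have h1 : ∑ j ∈ T, v {j} - ∑ j ∈ T.erase i, v {j} = v {i} := by
      rw [← Finset.sum_erase_add _ _ hiT]; ring
    have h2 : ∑ j ∈ S, v {j} - ∑ j ∈ S.erase i, v {j} = v {i} := by
      rw [← Finset.sum_erase_add _ _ hi]; ring
    have h3 : (∑ j ∈ T, v {j}) - (∑ j ∈ T.erase i, v {j}) - (∑ j ∈ S, v {j}) +
        (∑ j ∈ S.erase i, v {j}) = 0 := by linarith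
    rw [h3, mul_zero]
end Star
section Dicho
variable [Fintype α] [DecidableEq α] {G : SimpleGraph α}

def PatP4 (G : SimpleGraph α) (p0 p1 p2 p3 : α) : Prop :=
  G.Adj p0 p1 ∧ G.Adj p1 p2 ∧ G.Adj p2 p3 ∧ ¬G.Adj p0 p2 ∧ ¬G.Adj p0 p3 ∧ ¬G.Adj p1 p3 ∧
    p0 ≠ p2 ∧ p0 ≠ p3 ∧ p1 ≠ p3

def PatC4 (G : SimpleGraph α) (p0 p1 p2 p3 : α) : Prop :=
  G.Adj p0 p1 ∧ G.Adj p1 p2 ∧ G.Adj p2 p3 ∧ G.Adj p3 p0 ∧ ¬G.Adj p0 p2 ∧ ¬G.Adj p1 p3 ∧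
    p0 ≠ p2 ∧ p1 ≠ p3

def PatPaw (G : SimpleGraph α) (p0 p1 p2 p3 : α) : Prop :=
  G.Adj p0 p1 ∧ G.Adj p1 p2 ∧ G.Adj p2 p0 ∧ G.Adj p2 p3 ∧ ¬G.Adj p0 p3 ∧ ¬G.Adj p1 p3 ∧
    p0 ≠ p3 ∧ p1 ≠ p3

def PatDia (G : SimpleGraph α) (p0 p1 p2 p3 : α) : Prop :=
  G.Adj p0 p1 ∧ G.Adj p1 p2 ∧ G.Adj p2 p0 ∧ G.Adj p0 p3 ∧ G.Adj p1 p3 ∧ ¬G.Adj p2 p3 ∧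
    p2 ≠ p3

def HasBad (G : SimpleGraph α) : Prop :=
  (∃ p0 p1 p2 p3, PatP4 G p0 p1 p2 p3) ∨ (∃ p0 p1 p2 p3, PatC4 G p0 p1 p2 p3) ∨
  (∃ p0 p1 p2 p3, PatPaw G p0 p1 p2 p3) ∨ (∃ p0 p1 p2 p3, PatDia G p0 p1 p2 p3)

/-- an induced P3 in a connected non-complete graph -/
lemma exists_inducedP3 (hG : G.Connected) {x y : α} (hxy : x ≠ y) (hnadj : ¬G.Adj x y) :
    ∃ a c b, G.Adj a c ∧ G.Adj c b ∧ ¬G.Adj a b ∧ a ≠ b := by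
  have hd2 : 2 ≤ G.dist x y := by
    rcases Nat.lt_or_ge (G.dist x y) 2 with h | h
    · interval_cases hd : G.dist x y
      · exact absurd ((hG.dist_eq_zero_iff).mp hd) hxy
      · exact absurd (SimpleGraph.dist_eq_one_iff_adj.mp hd) hnadj
    · exact h
  obtain ⟨p, hp⟩ := hG.exists_walk_length_eq_dist x y
  match p, hp with
  | .nil, hp => simp [SimpleGraph.Walk.length_nil] at hp; simp at hd2
  | .cons h .nil, hp => simp at hp; omega
  | .cons (v := w1) h (.cons (v := w2) h2 q2), hp =>
    refine ⟨x, w1, w2, h, h2, ?_, ?_⟩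
    · intro hadj
      have hle := SimpleGraph.dist_le (SimpleGraph.Walk.cons hadj q2)
      simp [SimpleGraph.Walk.length_cons] at hle hp
      omega
    · rintro rfl
      have hle := SimpleGraph.dist_le q2
      simp [SimpleGraph.Walk.length_cons] at hle hp
      omega

lemma ext_lemma (hnb : ¬HasBad G) :
    ∀ a c b e, G.Adj a c → G.Adj c b → ¬G.Adj a b → a ≠ b →
      e ≠ a → e ≠ b → e ≠ c → (G.Adj e a ∨ G.Adj e b ∨ G.Adj e c) →
      G.Adj e c ∧ ¬G.Adj e a ∧ ¬G.Adj e b := by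
  intro a c b e hac hcb hnab hab hea heb hec hor
  by_cases h1 : G.Adj e a <;> by_cases h2 : G.Adj e b <;> by_cases h3 : G.Adj e c
  · exact absurd (Or.inr (Or.inr (Or.inr ⟨c, e, a, b,
      h3.symm, h1, hac, hcb, h2, hnab, hab⟩))) hnb
  · exact absurd (Or.inr (Or.inl ⟨e, a, c, b, h1, hac, hcb, h2.symm, h3, hnab, hec, hab⟩)) hnb
  · exact absurd (Or.inr (Or.inr (Or.inl ⟨e, a, c, b, h1, hac, h3.symm, hcb, h2, hnab,
      heb, hab⟩))) hnb
  · exact absurd (Or.inl ⟨e, a, c, b, h1, hac, hcb, h3, h2, hnab, hec, heb, hab⟩) hnb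
  · exact absurd (Or.inr (Or.inr (Or.inl ⟨e, b, c, a, h2, hcb.symm, h3.symm, hac.symm, h1,
      fun h => hnab h.symm, hea, fun h => hab h.symm⟩))) hnb
  · exact absurd (Or.inl ⟨e, b, c, a, h2, hcb.symm, hac.symm, h3, h1,
      fun h => hnab h.symm, hec, hea, fun h => hab h.symm⟩) hnb
  · exact ⟨h3, h1, h2⟩
  · rcases hor with h | h | h <;> contradiction

lemma dichotomy (hG : G.Connected) :
    (∀ a b : α, a ≠ b → G.Adj a b) ∨ (∃ c, IsStarCenter G c) ∨ HasBad G := by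
  by_cases hcomp : ∀ a b : α, a ≠ b → G.Adj a b
  · exact Or.inl hcomp
  by_cases hbad : HasBad G
  · exact Or.inr (Or.inr hbad)
  push_neg at hcomp
  obtain ⟨x, y, hxy, hnadj⟩ := hcomp
  obtain ⟨a, c, b, hac, hcb, hnab, hab⟩ := exists_inducedP3 hG hxy hnadj
  have ext := ext_lemma hbad
  have hAdjC : ∀ u, u ≠ c → G.Adj c u := by
    intro u hu
    by_contra hnadjcu
    have hd2 : 2 ≤ G.dist c u := by
      rcases Nat.lt_or_ge (G.dist c u) 2 with h | h
      · interval_cases hd : G.dist c u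
        · exact absurd ((hG.dist_eq_zero_iff).mp hd) (Ne.symm hu)
        · exact absurd (SimpleGraph.dist_eq_one_iff_adj.mp hd) hnadjcu
      · exact h
    obtain ⟨p, hp⟩ := hG.exists_walk_length_eq_dist c u
    match p, hp with
    | .nil, hp => simp [SimpleGraph.Walk.length_nil] at hp; simp at hd2
    | .cons h .nil, hp => simp at hp; omega
    | .cons (v := y1) h (.cons (v := y2) h2 q2), hp =>
      have hny2c : y2 ≠ c := by
        rintro rfl
        have hle := SimpleGraph.dist_le q2
        simp [SimpleGraph.Walk.length_cons] at hle hp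
        omega
      have hncy2 : ¬G.Adj c y2 := by
        intro hadj
        have hle := SimpleGraph.dist_le (SimpleGraph.Walk.cons hadj q2)
        simp [SimpleGraph.Walk.length_cons] at hle hp
        omega
      by_cases hy1a : y1 = a
      · subst hy1a
        have hy2b : y2 ≠ b := by rintro rfl; exact hnab h2
        have hy2a : y2 ≠ y1 := fun hh => G.irrefl (hh ▸ h2)
        have := ext y1 c b y2 h.symm hcb hnab hab
          hy2a hy2b hny2c (Or.inl h2.symm)
        exact this.2.1 h2.symm
      by_cases hy1b : y1 = b
      · subst hy1b
        have hy2a : y2 ≠ a := by rintro rfl; exact hnab h2.symm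
        have hy2b : y2 ≠ y1 := fun hh => G.irrefl (hh ▸ h2)
        have := ext a c y1 y2 hac h hnab hab hy2a hy2b hny2c (Or.inr (Or.inl h2.symm))
        exact this.2.2 h2.symm
      · have hy1c : y1 ≠ c := fun hh => G.irrefl (hh ▸ h)
        have h1 := ext a c b y1 hac hcb hnab hab hy1a hy1b hy1c (Or.inr (Or.inr h.symm))
        have hay1 : ¬G.Adj a y1 := fun hh => h1.2.1 hh.symm
        have haney1 : a ≠ y1 := fun hh => hy1a hh.symm
        have hy2a : y2 ≠ a := by rintro rfl; exact h1.2.1 h2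
        have hy2y1 : y2 ≠ y1 := fun hh => G.irrefl (hh ▸ h2)
        have h2' := ext a c y1 y2 hac h hay1 haney1 hy2a hy2y1 hny2c
          (Or.inr (Or.inl h2.symm))
        exact h2'.2.2 h2.symm
  have hstar2 : ∀ u w, G.Adj u w → u = c ∨ w = c := by
    intro u w huw
    by_contra hcon
    push_neg at hcon
    obtain ⟨hu, hw⟩ := hcon
    have hwu : w ≠ u := fun hh => G.irrefl (hh ▸ huw)
    by_cases hua : u = a
    · subst hua
      have hwb : w ≠ b := by rintro rfl; exact hnab huw
      have := ext u c b w hac hcb hnab hab (Ne.symm (fun hh => G.irrefl (hh ▸ huw)))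
        hwb hw (Or.inl huw.symm)
      exact this.2.1 huw.symm
    by_cases hub : u = b
    · subst hub
      have hwa : w ≠ a := by rintro rfl; exact hnab huw.symm
      have := ext a c u w hac hcb hnab hab hwa hwu hw (Or.inr (Or.inl huw.symm))
      exact this.2.2 huw.symm
    · have huc : u ≠ c := hu
      have h1 := ext a c b u hac hcb hnab hab hua hub huc (Or.inr (Or.inr (hAdjC u hu).symm))
      have hau : ¬G.Adj a u := fun hh => h1.2.1 hh.symm
      have haneu : a ≠ u := fun hh => hua hh.symm
      have hwa : w ≠ a := by rintro rfl; exact h1.2.1 huw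
      have := ext a c u w hac (hAdjC u hu) hau haneu hwa hwu hw (Or.inr (Or.inl huw.symm))
      exact this.2.2 huw.symm
  exact Or.inr (Or.inl ⟨c, hAdjC, hstar2⟩)
end Dicho
section Lift
variable [Fintype α] [DecidableEq α]

def bmem (p : α) (X : Finset α) : Bool := if p ∈ X then true else false

def lift4 (p0 p1 p2 p3 : α) (F : Bool → Bool → Bool → Bool → ℤ) (X : Finset α) : ℝ :=
  ((F (bmem p0 X) (bmem p1 X) (bmem p2 X) (bmem p3 X) : ℤ) : ℝ)

def tblL (F : Bool → Bool → Bool → Bool → ℤ) (s0 s1 s2 s3 : Bool) : ℤ :=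
  cond s0 (F s0 s1 s2 s3 - F false s1 s2 s3) 0 +
  cond s1 (F s0 s1 s2 s3 - F s0 false s2 s3) 0 +
  cond s2 (F s0 s1 s2 s3 - F s0 s1 false s3) 0 +
  cond s3 (F s0 s1 s2 s3 - F s0 s1 s2 false) 0

def tblR (F : Bool → Bool → Bool → Bool → ℤ) (s0 s1 s2 s3 t0 t1 t2 t3 : Bool) : ℤ :=
  cond s0 (F t0 t1 t2 t3 - F false t1 t2 t3) 0 +
  cond s1 (F t0 t1 t2 t3 - F t0 false t2 t3) 0 +
  cond s2 (F t0 t1 t2 t3 - F t0 t1 false t3) 0 +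
  cond s3 (F t0 t1 t2 t3 - F t0 t1 t2 false) 0

variable {p0 p1 p2 p3 : α} {F : Bool → Bool → Bool → Bool → ℤ}

lemma bmem_erase_self {X : Finset α} {p : α} : bmem p (X.erase p) = false := by
  simp [bmem]

lemma bmem_erase_ne {X : Finset α} {p q : α} (h : p ≠ q) :
    bmem p (X.erase q) = bmem p X := by
  simp only [bmem, Finset.mem_erase]
  by_cases hp : p ∈ X <;> simp [hp, h]

lemma bmem_true {X : Finset α} {p : α} (h : p ∈ X) : bmem p X = true := by simp [bmem, h]

lemma lift4_empty (h0 : F false false false false = 0) :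
    lift4 p0 p1 p2 p3 F ∅ = 0 := by
  simp [lift4, bmem, h0]

section distinct
variable (hd01 : p0 ≠ p1) (hd02 : p0 ≠ p2) (hd03 : p0 ≠ p3)
  (hd12 : p1 ≠ p2) (hd13 : p1 ≠ p3) (hd23 : p2 ≠ p3)

include hd01 hd02 hd03 hd12 hd13 hd23

omit hd01 hd02 hd03 hd12 hd13 hd23 in
lemma sum_four {f : α → ℝ} (hd01 : p0 ≠ p1) (hd02 : p0 ≠ p2) (hd03 : p0 ≠ p3)
    (hd12 : p1 ≠ p2) (hd13 : p1 ≠ p3) (hd23 : p2 ≠ p3) :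
    ∑ i ∈ ({p0, p1, p2, p3} : Finset α), f i = f p0 + f p1 + f p2 + f p3 := by
  rw [Finset.sum_insert (by simp [hd01, hd02, hd03]),
    Finset.sum_insert (by simp [hd12, hd13]),
    Finset.sum_insert (by simp [hd23]), Finset.sum_singleton]
  ring

/-- The key reduction: the AC sums of a lifted game are given by the tables. -/
lemma lift4_sumL (S : Finset α) :
    ∑ i ∈ S, (lift4 p0 p1 p2 p3 F S - lift4 p0 p1 p2 p3 F (S.erase i)) =
      ((tblL F (bmem p0 S) (bmem p1 S) (bmem p2 S) (bmem p3 S) : ℤ) : ℝ) := by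
  classical
  set v := lift4 p0 p1 p2 p3 F with hv
  set Q : Finset α := {p0, p1, p2, p3} with hQ
  have hstep1 : ∑ i ∈ S, (v S - v (S.erase i)) = ∑ i ∈ S ∩ Q, (v S - v (S.erase i)) := by
    refine (Finset.sum_subset Finset.inter_subset_left ?_).symm
    intro i hiS hi
    have hiQ : i ∉ Q := fun h => hi (Finset.mem_inter.mpr ⟨hiS, h⟩)
    have : v (S.erase i) = v S := by
      simp only [hv, lift4]
      rw [bmem_erase_ne, bmem_erase_ne, bmem_erase_ne, bmem_erase_ne] <;>
        first
          | rfl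
          | (intro h; exact hiQ (by simp [hQ, h.symm]))
    rw [this]; ring
  have hstep2 : ∑ i ∈ S ∩ Q, (v S - v (S.erase i)) =
      ∑ i ∈ Q, (if i ∈ S then v S - v (S.erase i) else 0) := by
    rw [show (∑ i ∈ S ∩ Q, (v S - v (S.erase i))) =
        ∑ i ∈ S ∩ Q, (if i ∈ S then v S - v (S.erase i) else 0) from
      Finset.sum_congr rfl (fun i hi => (if_pos (Finset.mem_inter.mp hi).1).symm)]
    refine Finset.sum_subset Finset.inter_subset_right (fun i hiQ hi => ?_)
    have : i ∉ S := fun h => hi (Finset.mem_inter.mpr ⟨h, hiQ⟩)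
    simp [this]
  rw [hstep1, hstep2, sum_four hd01 hd02 hd03 hd12 hd13 hd23]
  have e0 : (if p0 ∈ S then v S - v (S.erase p0) else 0) =
      ((cond (bmem p0 S) (F (bmem p0 S) (bmem p1 S) (bmem p2 S) (bmem p3 S) -
        F false (bmem p1 S) (bmem p2 S) (bmem p3 S)) 0 : ℤ) : ℝ) := by
    by_cases h : p0 ∈ S
    · rw [if_pos h, bmem_true h]
      simp only [hv, lift4, bmem_true h, bmem_erase_self,
        bmem_erase_ne (Ne.symm hd01), bmem_erase_ne (Ne.symm hd02),
        bmem_erase_ne (Ne.symm hd03), cond_true]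
      push_cast; ring
    · rw [if_neg h]
      simp [bmem, h]
  have e1 : (if p1 ∈ S then v S - v (S.erase p1) else 0) =
      ((cond (bmem p1 S) (F (bmem p0 S) (bmem p1 S) (bmem p2 S) (bmem p3 S) -
        F (bmem p0 S) false (bmem p2 S) (bmem p3 S)) 0 : ℤ) : ℝ) := by
    by_cases h : p1 ∈ S
    · rw [if_pos h, bmem_true h]
      simp only [hv, lift4, bmem_true h, bmem_erase_self,
        bmem_erase_ne hd01, bmem_erase_ne (Ne.symm hd12),
        bmem_erase_ne (Ne.symm hd13), cond_true]
      push_cast; ring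
    · rw [if_neg h]
      simp [bmem, h]
  have e2 : (if p2 ∈ S then v S - v (S.erase p2) else 0) =
      ((cond (bmem p2 S) (F (bmem p0 S) (bmem p1 S) (bmem p2 S) (bmem p3 S) -
        F (bmem p0 S) (bmem p1 S) false (bmem p3 S)) 0 : ℤ) : ℝ) := by
    by_cases h : p2 ∈ S
    · rw [if_pos h, bmem_true h]
      simp only [hv, lift4, bmem_true h, bmem_erase_self,
        bmem_erase_ne hd02, bmem_erase_ne hd12,
        bmem_erase_ne (Ne.symm hd23), cond_true]
      push_cast; ring
    · rw [if_neg h]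
      simp [bmem, h]
  have e3 : (if p3 ∈ S then v S - v (S.erase p3) else 0) =
      ((cond (bmem p3 S) (F (bmem p0 S) (bmem p1 S) (bmem p2 S) (bmem p3 S) -
        F (bmem p0 S) (bmem p1 S) (bmem p2 S) false) 0 : ℤ) : ℝ) := by
    by_cases h : p3 ∈ S
    · rw [if_pos h, bmem_true h]
      simp only [hv, lift4, bmem_true h, bmem_erase_self,
        bmem_erase_ne hd03, bmem_erase_ne hd13,
        bmem_erase_ne hd23, cond_true]
      push_cast; ring
    · rw [if_neg h]
      simp [bmem, h]
  rw [e0, e1, e2, e3, tblL]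
  push_cast
  ring

lemma lift4_sumR {S T : Finset α} (hST : S ⊆ T) :
    ∑ i ∈ S, (lift4 p0 p1 p2 p3 F T - lift4 p0 p1 p2 p3 F (T.erase i)) =
      ((tblR F (bmem p0 S) (bmem p1 S) (bmem p2 S) (bmem p3 S)
        (bmem p0 T) (bmem p1 T) (bmem p2 T) (bmem p3 T) : ℤ) : ℝ) := by
  classical
  set v := lift4 p0 p1 p2 p3 F with hv
  set Q : Finset α := {p0, p1, p2, p3} with hQ
  have hstep1 : ∑ i ∈ S, (v T - v (T.erase i)) = ∑ i ∈ S ∩ Q, (v T - v (T.erase i)) := by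
    refine (Finset.sum_subset Finset.inter_subset_left ?_).symm
    intro i hiS hi
    have hiQ : i ∉ Q := fun h => hi (Finset.mem_inter.mpr ⟨hiS, h⟩)
    have : v (T.erase i) = v T := by
      simp only [hv, lift4]
      rw [bmem_erase_ne, bmem_erase_ne, bmem_erase_ne, bmem_erase_ne] <;>
        first
          | rfl
          | (intro h; exact hiQ (by simp [hQ, h.symm]))
    rw [this]; ring
  have hstep2 : ∑ i ∈ S ∩ Q, (v T - v (T.erase i)) =
      ∑ i ∈ Q, (if i ∈ S then v T - v (T.erase i) else 0) := by
    rw [show (∑ i ∈ S ∩ Q, (v T - v (T.erase i))) =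
        ∑ i ∈ S ∩ Q, (if i ∈ S then v T - v (T.erase i) else 0) from
      Finset.sum_congr rfl (fun i hi => (if_pos (Finset.mem_inter.mp hi).1).symm)]
    refine Finset.sum_subset Finset.inter_subset_right (fun i hiQ hi => ?_)
    have : i ∉ S := fun h => hi (Finset.mem_inter.mpr ⟨h, hiQ⟩)
    simp [this]
  rw [hstep1, hstep2, sum_four hd01 hd02 hd03 hd12 hd13 hd23]
  have e0 : (if p0 ∈ S then v T - v (T.erase p0) else 0) =
      ((cond (bmem p0 S) (F (bmem p0 T) (bmem p1 T) (bmem p2 T) (bmem p3 T) -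
        F false (bmem p1 T) (bmem p2 T) (bmem p3 T)) 0 : ℤ) : ℝ) := by
    by_cases h : p0 ∈ S
    · rw [if_pos h, bmem_true h]
      simp only [hv, lift4, bmem_erase_self,
        bmem_erase_ne (Ne.symm hd01), bmem_erase_ne (Ne.symm hd02),
        bmem_erase_ne (Ne.symm hd03), cond_true]
      push_cast; ring
    · rw [if_neg h]
      simp [bmem, h]
  have e1 : (if p1 ∈ S then v T - v (T.erase p1) else 0) =
      ((cond (bmem p1 S) (F (bmem p0 T) (bmem p1 T) (bmem p2 T) (bmem p3 T) -
        F (bmem p0 T) false (bmem p2 T) (bmem p3 T)) 0 : ℤ) : ℝ) := by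
    by_cases h : p1 ∈ S
    · rw [if_pos h, bmem_true h]
      simp only [hv, lift4, bmem_erase_self,
        bmem_erase_ne hd01, bmem_erase_ne (Ne.symm hd12),
        bmem_erase_ne (Ne.symm hd13), cond_true]
      push_cast; ring
    · rw [if_neg h]
      simp [bmem, h]
  have e2 : (if p2 ∈ S then v T - v (T.erase p2) else 0) =
      ((cond (bmem p2 S) (F (bmem p0 T) (bmem p1 T) (bmem p2 T) (bmem p3 T) -
        F (bmem p0 T) (bmem p1 T) false (bmem p3 T)) 0 : ℤ) : ℝ) := by
    by_cases h : p2 ∈ S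
    · rw [if_pos h, bmem_true h]
      simp only [hv, lift4, bmem_erase_self,
        bmem_erase_ne hd02, bmem_erase_ne hd12,
        bmem_erase_ne (Ne.symm hd23), cond_true]
      push_cast; ring
    · rw [if_neg h]
      simp [bmem, h]
  have e3 : (if p3 ∈ S then v T - v (T.erase p3) else 0) =
      ((cond (bmem p3 S) (F (bmem p0 T) (bmem p1 T) (bmem p2 T) (bmem p3 T) -
        F (bmem p0 T) (bmem p1 T) (bmem p2 T) false) 0 : ℤ) : ℝ) := by
    by_cases h : p3 ∈ S
    · rw [if_pos h, bmem_true h]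
      simp only [hv, lift4, bmem_erase_self,
        bmem_erase_ne hd03, bmem_erase_ne hd13,
        bmem_erase_ne hd23, cond_true]
      push_cast; ring
    · rw [if_neg h]
      simp [bmem, h]
  rw [e0, e1, e2, e3, tblR]
  push_cast
  ring

lemma lift4_avgConvex
    (HF : ∀ s0 s1 s2 s3 t0 t1 t2 t3 : Bool, s0 ≤ t0 → s1 ≤ t1 → s2 ≤ t2 → s3 ≤ t3 →
      tblL F s0 s1 s2 s3 ≤ tblR F s0 s1 s2 s3 t0 t1 t2 t3) :
    AvgConvex (lift4 p0 p1 p2 p3 F) := by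
  intro S T hST
  rw [lift4_sumL hd01 hd02 hd03 hd12 hd13 hd23 S,
    lift4_sumR hd01 hd02 hd03 hd12 hd13 hd23 hST.subset]
  rw [Int.cast_le]
  refine HF _ _ _ _ _ _ _ _ ?_ ?_ ?_ ?_ <;>
  · simp only [bmem]
    split
    · next h => simp [hST.subset h]
    · exact Bool.false_le _
end distinct
end Lift
section Cex

def FP4 : Bool → Bool → Bool → Bool → ℤ
  | true, true, false, false => 8
  | true, false, true, false => 10
  | false, true, true, false => 10
  | false, false, true, true => 8
  | true, true, true, false => 19
  | true, true, false, true => 9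
  | true, false, true, true => 14
  | false, true, true, true => 14
  | true, true, true, true => 22
  | _, _, _, _ => 0

def Fcnt : Bool → Bool → Bool → Bool → ℤ := fun b0 b1 b2 b3 =>
  max ((b0.toNat + b1.toNat + b2.toNat + b3.toNat : ℤ) - 1) 0

def Fpaw : Bool → Bool → Bool → Bool → ℤ
  | true, true, false, false => 10
  | true, false, true, false => 12
  | true, false, false, true => 12
  | false, true, false, true => 4
  | false, false, true, true => 10
  | true, true, true, false => 17
  | true, true, false, true => 19
  | true, false, true, true => 23
  | false, true, true, true => 13
  | true, true, true, true => 28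
  | _, _, _, _ => 0

variable [Fintype α] [DecidableEq α] {G : SimpleGraph α}

lemma rtg_step {X : Finset α} {a b : α} (ha : a ∈ X) (hb : b ∈ X) (h : G.Adj a b) :
    Relation.ReflTransGen (gRel G X) a b :=
  Relation.ReflTransGen.single ⟨ha, hb, h⟩

lemma sum_three {p0 p1 p2 : α} {f : α → ℝ} (hd01 : p0 ≠ p1) (hd02 : p0 ≠ p2)
    (hd12 : p1 ≠ p2) :
    ∑ i ∈ ({p0, p1, p2} : Finset α), f i = f p0 + f p1 + f p2 := by
  rw [Finset.sum_insert (by simp [hd01, hd02]), Finset.sum_insert (by simp [hd12]),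
    Finset.sum_singleton]
  ring

lemma comp_singleton {X : Finset α} {a : α} (ha : a ∈ X)
    (hcl : ∀ b ∈ X, G.Adj a b → False) : ∀ i ∈ ({a} : Finset α), compOf G X i = {a} := by
  intro i hi
  rw [Finset.mem_singleton] at hi
  subst hi
  refine compOf_eq_of (Finset.singleton_subset_iff.mpr ha) (Finset.mem_singleton_self i)
    ?_ (fun b hb => by rw [Finset.mem_singleton.mp hb])
  intro x hx b hb hadj
  rw [Finset.mem_singleton.mp hx] at hadj
  exact absurd (hcl b hb hadj) not_false

set_option maxHeartbeats 2000000 in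
lemma P4_cex {p0 p1 p2 p3 : α} (hpat : PatP4 G p0 p1 p2 p3) :
    ∃ v : Finset α → ℝ, v ∅ = 0 ∧ AvgConvex v ∧ ¬ AvgConvex (commGame G v) := by
  obtain ⟨h01, h12, h23, n02, n03, n13, hd02, hd03, hd13⟩ := hpat
  have hd01 : p0 ≠ p1 := h01.ne
  have hd12 : p1 ≠ p2 := h12.ne
  have hd23 : p2 ≠ p3 := h23.ne
  set v : Finset α → ℝ := lift4 p0 p1 p2 p3 FP4 with hvdef
  refine ⟨v, lift4_empty (by decide), lift4_avgConvex hd01 hd02 hd03 hd12 hd13 hd23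
    (by decide), ?_⟩
  intro hAvg
  set T : Finset α := {p0, p1, p2, p3} with hT
  set S : Finset α := {p0, p1, p2} with hS
  have hSsubT : S ⊆ T := by
    intro x hx; simp only [hS, hT, Finset.mem_insert, Finset.mem_singleton] at hx ⊢; tauto
  have hST : S ⊂ T := hSsubT.ssubset_of_ne (by
    intro hEq
    have : p3 ∈ S := hEq.symm ▸ (by simp [hT] : p3 ∈ T)
    simp only [hS, Finset.mem_insert, Finset.mem_singleton] at this
    rcases this with h | h | h
    exacts [hd03 h.symm, hd13 h.symm, hd23 h.symm])
  have key := hAvg S T hST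
  -- memberships
  have m0T : p0 ∈ T := by simp [hT]
  have m1T : p1 ∈ T := by simp [hT]
  have m2T : p2 ∈ T := by simp [hT]
  have m3T : p3 ∈ T := by simp [hT]
  have m0S : p0 ∈ S := by simp [hS]
  have m1S : p1 ∈ S := by simp [hS]
  have m2S : p2 ∈ S := by simp [hS]
  -- erase identities
  have eT0 : T.erase p0 = {p1, p2, p3} := by
    rw [hT, Finset.erase_insert (by simp [hd01, hd02, hd03])]
  have eT1 : T.erase p1 = {p0, p2, p3} := by
    rw [hT, Finset.erase_insert_of_ne hd01,
      Finset.erase_insert (by simp [hd12, hd13])]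
  have eT2 : T.erase p2 = {p0, p1, p3} := by
    rw [hT, Finset.erase_insert_of_ne hd02,
      Finset.erase_insert_of_ne hd12,
      Finset.erase_insert (by simp [hd23])]
  have eS0 : S.erase p0 = {p1, p2} := by
    rw [hS, Finset.erase_insert (by simp [hd01, hd02])]
  have eS1 : S.erase p1 = {p0, p2} := by
    rw [hS, Finset.erase_insert_of_ne hd01,
      Finset.erase_insert (by simp [hd12])]
  have eS2 : S.erase p2 = {p0, p1} := by
    rw [hS, Finset.erase_insert_of_ne hd02,
      Finset.erase_insert_of_ne hd12, Finset.erase_singleton]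
    simp
  -- commGame values
  have gT : commGame G v T = v T := by
    refine commGame_eq_single v ⟨p0, m0T⟩ (compOf_all (Finset.Subset.refl T) m0T
      (fun a _ b hb _ => hb) ?_)
    intro b hb
    simp only [hT, Finset.mem_insert, Finset.mem_singleton] at hb
    rcases hb with rfl | rfl | rfl | rfl
    · exact Relation.ReflTransGen.refl
    · exact rtg_step m0T m1T h01
    · exact (rtg_step m0T m1T h01).tail ⟨m1T, m2T, h12⟩
    · exact ((rtg_step m0T m1T h01).tail ⟨m1T, m2T, h12⟩).tail ⟨m2T, m3T, h23⟩
  have gT0 : commGame G v (T.erase p0) = v {p1, p2, p3} := by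
    rw [eT0]
    have m1 : p1 ∈ ({p1, p2, p3} : Finset α) := by simp
    have m2 : p2 ∈ ({p1, p2, p3} : Finset α) := by simp
    have m3 : p3 ∈ ({p1, p2, p3} : Finset α) := by simp
    refine commGame_eq_single v ⟨p1, m1⟩ (compOf_all (Finset.Subset.refl _) m1
      (fun a _ b hb _ => hb) ?_)
    intro b hb
    simp only [Finset.mem_insert, Finset.mem_singleton] at hb
    rcases hb with rfl | rfl | rfl
    · exact Relation.ReflTransGen.refl
    · exact rtg_step m1 m2 h12
    · exact (rtg_step m1 m2 h12).tail ⟨m2, m3, h23⟩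
  have gT1 : commGame G v (T.erase p1) = v {p0} + v {p2, p3} := by
    rw [eT1]
    have m0 : p0 ∈ ({p0, p2, p3} : Finset α) := by simp
    have m2 : p2 ∈ ({p0, p2, p3} : Finset α) := by simp
    have m3 : p3 ∈ ({p0, p2, p3} : Finset α) := by simp
    refine commGame_eq_pair v ⟨p0, Finset.mem_singleton_self p0⟩
      ⟨p2, by simp⟩ (by simp [Finset.disjoint_left, hd02, hd03]) (by
        ext x; simp only [Finset.mem_insert, Finset.mem_singleton, Finset.mem_union]; try tauto)
      (comp_singleton m0 ?_) (compOf_all (fun x hx => by simp only [Finset.mem_insert, Finset.mem_singleton] at hx; rcases hx with rfl | rfl; exacts [m2, m3]) (Finset.mem_insert_self p2 {p3}) ?_ ?_)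
    · intro b hb hadj
      simp only [Finset.mem_insert, Finset.mem_singleton] at hb
      rcases hb with rfl | rfl | rfl
      exacts [G.irrefl hadj, n02 hadj, n03 hadj]
    · intro a ha b hb hadj
      simp only [Finset.mem_insert, Finset.mem_singleton] at ha hb ⊢
      rcases ha with rfl | rfl <;> rcases hb with rfl | rfl | rfl <;>
        first
          | exact Or.inl rfl
          | exact Or.inr rfl
          | exact absurd hadj.symm n02
          | exact absurd hadj.symm n03
    · intro b hb
      simp only [Finset.mem_insert, Finset.mem_singleton] at hb
      rcases hb with rfl | rfl
      · exact Relation.ReflTransGen.refl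
      · exact rtg_step m2 m3 h23
  have gT2 : commGame G v (T.erase p2) = v {p0, p1} + v {p3} := by
    rw [eT2]
    have m0 : p0 ∈ ({p0, p1, p3} : Finset α) := by simp
    have m1 : p1 ∈ ({p0, p1, p3} : Finset α) := by simp
    have m3 : p3 ∈ ({p0, p1, p3} : Finset α) := by simp
    refine commGame_eq_pair v ⟨p0, by simp⟩ ⟨p3, Finset.mem_singleton_self p3⟩
      (by simp [Finset.disjoint_left, hd03, hd13]) (by
        ext x; simp only [Finset.mem_insert, Finset.mem_singleton, Finset.mem_union]; try tauto)
      (compOf_all (fun x hx => by simp only [Finset.mem_insert, Finset.mem_singleton] at hx; rcases hx with rfl | rfl; exacts [m0, m1])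
        (Finset.mem_insert_self p0 {p1}) ?_ ?_) (comp_singleton m3 ?_)
    · intro a ha b hb hadj
      simp only [Finset.mem_insert, Finset.mem_singleton] at ha hb ⊢
      rcases ha with rfl | rfl <;> rcases hb with rfl | rfl | rfl <;>
        first
          | exact Or.inl rfl
          | exact Or.inr rfl
          | exact absurd hadj n03
          | exact absurd hadj n13
    · intro b hb
      simp only [Finset.mem_insert, Finset.mem_singleton] at hb
      rcases hb with rfl | rfl
      · exact Relation.ReflTransGen.refl
      · exact rtg_step m0 m1 h01
    · intro b hb hadj
      simp only [Finset.mem_insert, Finset.mem_singleton] at hb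
      rcases hb with rfl | rfl | rfl
      exacts [absurd hadj.symm n03, absurd hadj.symm n13, G.irrefl hadj]
  have gS : commGame G v S = v S := by
    refine commGame_eq_single v ⟨p0, m0S⟩ (compOf_all (Finset.Subset.refl S) m0S
      (fun a _ b hb _ => hb) ?_)
    intro b hb
    simp only [hS, Finset.mem_insert, Finset.mem_singleton] at hb
    rcases hb with rfl | rfl | rfl
    · exact Relation.ReflTransGen.refl
    · exact rtg_step m0S m1S h01
    · exact (rtg_step m0S m1S h01).tail ⟨m1S, m2S, h12⟩
  have gS0 : commGame G v (S.erase p0) = v {p1, p2} := by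
    rw [eS0]
    have m1 : p1 ∈ ({p1, p2} : Finset α) := by simp
    have m2 : p2 ∈ ({p1, p2} : Finset α) := by simp
    refine commGame_eq_single v ⟨p1, m1⟩ (compOf_all (Finset.Subset.refl _) m1
      (fun a _ b hb _ => hb) ?_)
    intro b hb
    simp only [Finset.mem_insert, Finset.mem_singleton] at hb
    rcases hb with rfl | rfl
    · exact Relation.ReflTransGen.refl
    · exact rtg_step m1 m2 h12
  have gS1 : commGame G v (S.erase p1) = v {p0} + v {p2} := by
    rw [eS1]
    have m0 : p0 ∈ ({p0, p2} : Finset α) := by simp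
    have m2 : p2 ∈ ({p0, p2} : Finset α) := by simp
    refine commGame_eq_pair v ⟨p0, Finset.mem_singleton_self p0⟩
      ⟨p2, Finset.mem_singleton_self p2⟩ (by simp [Finset.disjoint_left, hd02])
      (by ext x; simp only [Finset.mem_insert, Finset.mem_singleton, Finset.mem_union]; try tauto)
      (comp_singleton m0 ?_) (comp_singleton m2 ?_)
    · intro b hb hadj
      simp only [Finset.mem_insert, Finset.mem_singleton] at hb
      rcases hb with rfl | rfl
      exacts [G.irrefl hadj, n02 hadj]
    · intro b hb hadj
      simp only [Finset.mem_insert, Finset.mem_singleton] at hb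
      rcases hb with rfl | rfl
      exacts [absurd hadj.symm n02, G.irrefl hadj]
  have gS2 : commGame G v (S.erase p2) = v {p0, p1} := by
    rw [eS2]
    have m0 : p0 ∈ ({p0, p1} : Finset α) := by simp
    have m1 : p1 ∈ ({p0, p1} : Finset α) := by simp
    refine commGame_eq_single v ⟨p0, m0⟩ (compOf_all (Finset.Subset.refl _) m0
      (fun a _ b hb _ => hb) ?_)
    intro b hb
    simp only [Finset.mem_insert, Finset.mem_singleton] at hb
    rcases hb with rfl | rfl
    · exact Relation.ReflTransGen.refl
    · exact rtg_step m0 m1 h01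
  rw [hS] at key
  rw [sum_three hd01 hd02 hd12, sum_three hd01 hd02 hd12] at key
  rw [← hS] at key
  rw [gT, gT0, gT1, gT2, gS, gS0, gS1, gS2] at key
  simp only [hvdef, lift4, bmem, hS, hT] at key
  simp only [Finset.mem_insert, Finset.mem_singleton] at key
  simp only [hd01, hd02, hd03, hd12, hd13, hd23, Ne.symm hd01, Ne.symm hd02, Ne.symm hd03,
    Ne.symm hd12, Ne.symm hd13, Ne.symm hd23, if_true, if_false, eq_self_iff_true,
    or_true, true_or, or_false, false_or] at key
  norm_num [FP4] at key
end Cex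
section Cex2
variable [Fintype α] [DecidableEq α] {G : SimpleGraph α}

set_option maxHeartbeats 2000000 in
lemma C4_cex {p0 p1 p2 p3 : α} (hpat : PatC4 G p0 p1 p2 p3) :
    ∃ v : Finset α → ℝ, v ∅ = 0 ∧ AvgConvex v ∧ ¬ AvgConvex (commGame G v) := by
  obtain ⟨h01, h12, h23, h30, n02, n13, hd02, hd13⟩ := hpat
  have hd01 : p0 ≠ p1 := h01.ne
  have hd12 : p1 ≠ p2 := h12.ne
  have hd23 : p2 ≠ p3 := h23.ne
  have hd03 : p0 ≠ p3 := Ne.symm h30.ne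
  set v : Finset α → ℝ := lift4 p0 p1 p2 p3 Fcnt with hvdef
  refine ⟨v, lift4_empty (by decide), lift4_avgConvex hd01 hd02 hd03 hd12 hd13 hd23
    (by decide), ?_⟩
  intro hAvg
  set T : Finset α := {p0, p1, p2, p3} with hT
  set S : Finset α := {p0, p1, p2} with hS
  have hSsubT : S ⊆ T := by
    intro x hx; simp only [hS, hT, Finset.mem_insert, Finset.mem_singleton] at hx ⊢; tauto
  have hST : S ⊂ T := hSsubT.ssubset_of_ne (by
    intro hEq
    have : p3 ∈ S := hEq.symm ▸ (by simp [hT] : p3 ∈ T)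
    simp only [hS, Finset.mem_insert, Finset.mem_singleton] at this
    rcases this with h | h | h
    exacts [hd03 h.symm, hd13 h.symm, hd23 h.symm])
  have key := hAvg S T hST
  have m0T : p0 ∈ T := by simp [hT]
  have m1T : p1 ∈ T := by simp [hT]
  have m2T : p2 ∈ T := by simp [hT]
  have m3T : p3 ∈ T := by simp [hT]
  have m0S : p0 ∈ S := by simp [hS]
  have m1S : p1 ∈ S := by simp [hS]
  have m2S : p2 ∈ S := by simp [hS]
  have eT0 : T.erase p0 = {p1, p2, p3} := by
    rw [hT, Finset.erase_insert (by simp [hd01, hd02, hd03])]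
  have eT1 : T.erase p1 = {p0, p2, p3} := by
    rw [hT, Finset.erase_insert_of_ne hd01,
      Finset.erase_insert (by simp [hd12, hd13])]
  have eT2 : T.erase p2 = {p0, p1, p3} := by
    rw [hT, Finset.erase_insert_of_ne hd02,
      Finset.erase_insert_of_ne hd12,
      Finset.erase_insert (by simp [hd23])]
  have eS0 : S.erase p0 = {p1, p2} := by
    rw [hS, Finset.erase_insert (by simp [hd01, hd02])]
  have eS1 : S.erase p1 = {p0, p2} := by
    rw [hS, Finset.erase_insert_of_ne hd01,
      Finset.erase_insert (by simp [hd12])]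
  have eS2 : S.erase p2 = {p0, p1} := by
    rw [hS, Finset.erase_insert_of_ne hd02,
      Finset.erase_insert_of_ne hd12, Finset.erase_singleton]
    simp
  have gT : commGame G v T = v T := by
    refine commGame_eq_single v ⟨p0, m0T⟩ (compOf_all (Finset.Subset.refl T) m0T
      (fun a _ b hb _ => hb) ?_)
    intro b hb
    simp only [hT, Finset.mem_insert, Finset.mem_singleton] at hb
    rcases hb with rfl | rfl | rfl | rfl
    · exact Relation.ReflTransGen.refl
    · exact rtg_step m0T m1T h01
    · exact (rtg_step m0T m1T h01).tail ⟨m1T, m2T, h12⟩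
    · exact ((rtg_step m0T m1T h01).tail ⟨m1T, m2T, h12⟩).tail ⟨m2T, m3T, h23⟩
  have gT0 : commGame G v (T.erase p0) = v {p1, p2, p3} := by
    rw [eT0]
    have m1 : p1 ∈ ({p1, p2, p3} : Finset α) := by simp
    have m2 : p2 ∈ ({p1, p2, p3} : Finset α) := by simp
    have m3 : p3 ∈ ({p1, p2, p3} : Finset α) := by simp
    refine commGame_eq_single v ⟨p1, m1⟩ (compOf_all (Finset.Subset.refl _) m1
      (fun a _ b hb _ => hb) ?_)
    intro b hb
    simp only [Finset.mem_insert, Finset.mem_singleton] at hb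
    rcases hb with rfl | rfl | rfl
    · exact Relation.ReflTransGen.refl
    · exact rtg_step m1 m2 h12
    · exact (rtg_step m1 m2 h12).tail ⟨m2, m3, h23⟩
  have gT1 : commGame G v (T.erase p1) = v {p0, p2, p3} := by
    rw [eT1]
    have m0 : p0 ∈ ({p0, p2, p3} : Finset α) := by simp
    have m2 : p2 ∈ ({p0, p2, p3} : Finset α) := by simp
    have m3 : p3 ∈ ({p0, p2, p3} : Finset α) := by simp
    refine commGame_eq_single v ⟨p3, m3⟩ (compOf_all (Finset.Subset.refl _) m3
      (fun a _ b hb _ => hb) ?_)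
    intro b hb
    simp only [Finset.mem_insert, Finset.mem_singleton] at hb
    rcases hb with rfl | rfl | rfl
    · exact rtg_step m3 m0 h30
    · exact rtg_step m3 m2 h23.symm
    · exact Relation.ReflTransGen.refl
  have gT2 : commGame G v (T.erase p2) = v {p0, p1, p3} := by
    rw [eT2]
    have m0 : p0 ∈ ({p0, p1, p3} : Finset α) := by simp
    have m1 : p1 ∈ ({p0, p1, p3} : Finset α) := by simp
    have m3 : p3 ∈ ({p0, p1, p3} : Finset α) := by simp
    refine commGame_eq_single v ⟨p0, m0⟩ (compOf_all (Finset.Subset.refl _) m0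
      (fun a _ b hb _ => hb) ?_)
    intro b hb
    simp only [Finset.mem_insert, Finset.mem_singleton] at hb
    rcases hb with rfl | rfl | rfl
    · exact Relation.ReflTransGen.refl
    · exact rtg_step m0 m1 h01
    · exact rtg_step m0 m3 h30.symm
  have gS : commGame G v S = v S := by
    refine commGame_eq_single v ⟨p0, m0S⟩ (compOf_all (Finset.Subset.refl S) m0S
      (fun a _ b hb _ => hb) ?_)
    intro b hb
    simp only [hS, Finset.mem_insert, Finset.mem_singleton] at hb
    rcases hb with rfl | rfl | rfl
    · exact Relation.ReflTransGen.refl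
    · exact rtg_step m0S m1S h01
    · exact (rtg_step m0S m1S h01).tail ⟨m1S, m2S, h12⟩
  have gS0 : commGame G v (S.erase p0) = v {p1, p2} := by
    rw [eS0]
    have m1 : p1 ∈ ({p1, p2} : Finset α) := by simp
    have m2 : p2 ∈ ({p1, p2} : Finset α) := by simp
    refine commGame_eq_single v ⟨p1, m1⟩ (compOf_all (Finset.Subset.refl _) m1
      (fun a _ b hb _ => hb) ?_)
    intro b hb
    simp only [Finset.mem_insert, Finset.mem_singleton] at hb
    rcases hb with rfl | rfl
    · exact Relation.ReflTransGen.refl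
    · exact rtg_step m1 m2 h12
  have gS1 : commGame G v (S.erase p1) = v {p0} + v {p2} := by
    rw [eS1]
    have m0 : p0 ∈ ({p0, p2} : Finset α) := by simp
    have m2 : p2 ∈ ({p0, p2} : Finset α) := by simp
    refine commGame_eq_pair v ⟨p0, Finset.mem_singleton_self p0⟩
      ⟨p2, Finset.mem_singleton_self p2⟩ (by simp [Finset.disjoint_left, hd02])
      (by ext x; simp only [Finset.mem_insert, Finset.mem_singleton, Finset.mem_union]; try tauto)
      (comp_singleton m0 ?_) (comp_singleton m2 ?_)
    · intro b hb hadj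
      simp only [Finset.mem_insert, Finset.mem_singleton] at hb
      rcases hb with rfl | rfl
      exacts [G.irrefl hadj, n02 hadj]
    · intro b hb hadj
      simp only [Finset.mem_insert, Finset.mem_singleton] at hb
      rcases hb with rfl | rfl
      exacts [absurd hadj.symm n02, G.irrefl hadj]
  have gS2 : commGame G v (S.erase p2) = v {p0, p1} := by
    rw [eS2]
    have m0 : p0 ∈ ({p0, p1} : Finset α) := by simp
    have m1 : p1 ∈ ({p0, p1} : Finset α) := by simp
    refine commGame_eq_single v ⟨p0, m0⟩ (compOf_all (Finset.Subset.refl _) m0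
      (fun a _ b hb _ => hb) ?_)
    intro b hb
    simp only [Finset.mem_insert, Finset.mem_singleton] at hb
    rcases hb with rfl | rfl
    · exact Relation.ReflTransGen.refl
    · exact rtg_step m0 m1 h01
  rw [hS] at key
  rw [sum_three hd01 hd02 hd12, sum_three hd01 hd02 hd12] at key
  rw [← hS] at key
  rw [gT, gT0, gT1, gT2, gS, gS0, gS1, gS2] at key
  simp only [hvdef, lift4, bmem, hS, hT] at key
  simp only [Finset.mem_insert, Finset.mem_singleton] at key
  simp only [hd01, hd02, hd03, hd12, hd13, hd23, Ne.symm hd01, Ne.symm hd02, Ne.symm hd03,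
    Ne.symm hd12, Ne.symm hd13, Ne.symm hd23, if_true, if_false, eq_self_iff_true,
    or_true, true_or, or_false, false_or] at key
  norm_num [Fcnt] at key
end Cex2
section Cex3
variable [Fintype α] [DecidableEq α] {G : SimpleGraph α}

set_option maxHeartbeats 2000000 in
lemma Paw_cex {p0 p1 p2 p3 : α} (hpat : PatPaw G p0 p1 p2 p3) :
    ∃ v : Finset α → ℝ, v ∅ = 0 ∧ AvgConvex v ∧ ¬ AvgConvex (commGame G v) := by
  obtain ⟨h01, h12, h20, h23, n03, n13, hd03, hd13⟩ := hpat
  have hd01 : p0 ≠ p1 := h01.ne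
  have hd12 : p1 ≠ p2 := h12.ne
  have hd23 : p2 ≠ p3 := h23.ne
  have hd02 : p0 ≠ p2 := Ne.symm h20.ne
  set v : Finset α → ℝ := lift4 p0 p1 p2 p3 Fpaw with hvdef
  refine ⟨v, lift4_empty (by decide), lift4_avgConvex hd01 hd02 hd03 hd12 hd13 hd23
    (by decide), ?_⟩
  intro hAvg
  set T : Finset α := {p0, p1, p2, p3} with hT
  set S : Finset α := {p0, p2, p3} with hS
  have hSsubT : S ⊆ T := by
    intro x hx; simp only [hS, hT, Finset.mem_insert, Finset.mem_singleton] at hx ⊢; tauto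
  have hST : S ⊂ T := hSsubT.ssubset_of_ne (by
    intro hEq
    have : p1 ∈ S := hEq.symm ▸ (by simp [hT] : p1 ∈ T)
    simp only [hS, Finset.mem_insert, Finset.mem_singleton] at this
    rcases this with h | h | h
    exacts [hd01 h.symm, hd12 h, hd13 h])
  have key := hAvg S T hST
  have m0T : p0 ∈ T := by simp [hT]
  have m1T : p1 ∈ T := by simp [hT]
  have m2T : p2 ∈ T := by simp [hT]
  have m3T : p3 ∈ T := by simp [hT]
  have m0S : p0 ∈ S := by simp [hS]
  have m2S : p2 ∈ S := by simp [hS]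
  have m3S : p3 ∈ S := by simp [hS]
  have eT0 : T.erase p0 = {p1, p2, p3} := by
    rw [hT, Finset.erase_insert (by simp [hd01, hd02, hd03])]
  have eT2 : T.erase p2 = {p0, p1, p3} := by
    rw [hT, Finset.erase_insert_of_ne hd02, Finset.erase_insert_of_ne hd12,
      Finset.erase_insert (by simp [hd23])]
  have eT3 : T.erase p3 = {p0, p1, p2} := by
    rw [hT, Finset.erase_insert_of_ne hd03, Finset.erase_insert_of_ne hd13,
      Finset.erase_insert_of_ne hd23, Finset.erase_singleton]
    simp
  have eS0 : S.erase p0 = {p2, p3} := by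
    rw [hS, Finset.erase_insert (by simp [hd02, hd03])]
  have eS2 : S.erase p2 = {p0, p3} := by
    rw [hS, Finset.erase_insert_of_ne hd02, Finset.erase_insert (by simp [hd23])]
  have eS3 : S.erase p3 = {p0, p2} := by
    rw [hS, Finset.erase_insert_of_ne hd03, Finset.erase_insert_of_ne hd23,
      Finset.erase_singleton]
    simp
  have gT : commGame G v T = v T := by
    refine commGame_eq_single v ⟨p2, m2T⟩ (compOf_all (Finset.Subset.refl T) m2T
      (fun a _ b hb _ => hb) ?_)
    intro b hb
    simp only [hT, Finset.mem_insert, Finset.mem_singleton] at hb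
    rcases hb with rfl | rfl | rfl | rfl
    · exact rtg_step m2T m0T h20
    · exact rtg_step m2T m1T h12.symm
    · exact Relation.ReflTransGen.refl
    · exact rtg_step m2T m3T h23
  have gT0 : commGame G v (T.erase p0) = v {p1, p2, p3} := by
    rw [eT0]
    have m1 : p1 ∈ ({p1, p2, p3} : Finset α) := by simp
    have m2 : p2 ∈ ({p1, p2, p3} : Finset α) := by simp
    have m3 : p3 ∈ ({p1, p2, p3} : Finset α) := by simp
    refine commGame_eq_single v ⟨p2, m2⟩ (compOf_all (Finset.Subset.refl _) m2
      (fun a _ b hb _ => hb) ?_)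
    intro b hb
    simp only [Finset.mem_insert, Finset.mem_singleton] at hb
    rcases hb with rfl | rfl | rfl
    · exact rtg_step m2 m1 h12.symm
    · exact Relation.ReflTransGen.refl
    · exact rtg_step m2 m3 h23
  have gT2 : commGame G v (T.erase p2) = v {p0, p1} + v {p3} := by
    rw [eT2]
    have m0 : p0 ∈ ({p0, p1, p3} : Finset α) := by simp
    have m1 : p1 ∈ ({p0, p1, p3} : Finset α) := by simp
    have m3 : p3 ∈ ({p0, p1, p3} : Finset α) := by simp
    refine commGame_eq_pair v ⟨p0, by simp⟩ ⟨p3, Finset.mem_singleton_self p3⟩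
      (by simp [Finset.disjoint_left, hd03, hd13]) (by
        ext x; simp only [Finset.mem_insert, Finset.mem_singleton, Finset.mem_union]; try tauto)
      (compOf_all (fun x hx => by simp only [Finset.mem_insert, Finset.mem_singleton] at hx; rcases hx with rfl | rfl; exacts [m0, m1])
        (Finset.mem_insert_self p0 {p1}) ?_ ?_) (comp_singleton m3 ?_)
    · intro a ha b hb hadj
      simp only [Finset.mem_insert, Finset.mem_singleton] at ha hb ⊢
      rcases ha with rfl | rfl <;> rcases hb with rfl | rfl | rfl <;>
        first
          | exact Or.inl rfl
          | exact Or.inr rfl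
          | exact absurd hadj n03
          | exact absurd hadj n13
    · intro b hb
      simp only [Finset.mem_insert, Finset.mem_singleton] at hb
      rcases hb with rfl | rfl
      · exact Relation.ReflTransGen.refl
      · exact rtg_step m0 m1 h01
    · intro b hb hadj
      simp only [Finset.mem_insert, Finset.mem_singleton] at hb
      rcases hb with rfl | rfl | rfl
      exacts [absurd hadj.symm n03, absurd hadj.symm n13, G.irrefl hadj]
  have gT3 : commGame G v (T.erase p3) = v {p0, p1, p2} := by
    rw [eT3]
    have m0 : p0 ∈ ({p0, p1, p2} : Finset α) := by simp
    have m1 : p1 ∈ ({p0, p1, p2} : Finset α) := by simp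
    have m2 : p2 ∈ ({p0, p1, p2} : Finset α) := by simp
    refine commGame_eq_single v ⟨p0, m0⟩ (compOf_all (Finset.Subset.refl _) m0
      (fun a _ b hb _ => hb) ?_)
    intro b hb
    simp only [Finset.mem_insert, Finset.mem_singleton] at hb
    rcases hb with rfl | rfl | rfl
    · exact Relation.ReflTransGen.refl
    · exact rtg_step m0 m1 h01
    · exact rtg_step m0 m2 h20.symm
  have gS : commGame G v S = v S := by
    refine commGame_eq_single v ⟨p2, m2S⟩ (compOf_all (Finset.Subset.refl S) m2S
      (fun a _ b hb _ => hb) ?_)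
    intro b hb
    simp only [hS, Finset.mem_insert, Finset.mem_singleton] at hb
    rcases hb with rfl | rfl | rfl
    · exact rtg_step m2S m0S h20
    · exact Relation.ReflTransGen.refl
    · exact rtg_step m2S m3S h23
  have gS0 : commGame G v (S.erase p0) = v {p2, p3} := by
    rw [eS0]
    have m2 : p2 ∈ ({p2, p3} : Finset α) := by simp
    have m3 : p3 ∈ ({p2, p3} : Finset α) := by simp
    refine commGame_eq_single v ⟨p2, m2⟩ (compOf_all (Finset.Subset.refl _) m2
      (fun a _ b hb _ => hb) ?_)
    intro b hb
    simp only [Finset.mem_insert, Finset.mem_singleton] at hb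
    rcases hb with rfl | rfl
    · exact Relation.ReflTransGen.refl
    · exact rtg_step m2 m3 h23
  have gS2 : commGame G v (S.erase p2) = v {p0} + v {p3} := by
    rw [eS2]
    have m0 : p0 ∈ ({p0, p3} : Finset α) := by simp
    have m3 : p3 ∈ ({p0, p3} : Finset α) := by simp
    refine commGame_eq_pair v ⟨p0, Finset.mem_singleton_self p0⟩
      ⟨p3, Finset.mem_singleton_self p3⟩ (by simp [Finset.disjoint_left, hd03])
      (by ext x; simp only [Finset.mem_insert, Finset.mem_singleton, Finset.mem_union]; try tauto)
      (comp_singleton m0 ?_) (comp_singleton m3 ?_)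
    · intro b hb hadj
      simp only [Finset.mem_insert, Finset.mem_singleton] at hb
      rcases hb with rfl | rfl
      exacts [G.irrefl hadj, n03 hadj]
    · intro b hb hadj
      simp only [Finset.mem_insert, Finset.mem_singleton] at hb
      rcases hb with rfl | rfl
      exacts [absurd hadj.symm n03, G.irrefl hadj]
  have gS3 : commGame G v (S.erase p3) = v {p0, p2} := by
    rw [eS3]
    have m0 : p0 ∈ ({p0, p2} : Finset α) := by simp
    have m2 : p2 ∈ ({p0, p2} : Finset α) := by simp
    refine commGame_eq_single v ⟨p0, m0⟩ (compOf_all (Finset.Subset.refl _) m0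
      (fun a _ b hb _ => hb) ?_)
    intro b hb
    simp only [Finset.mem_insert, Finset.mem_singleton] at hb
    rcases hb with rfl | rfl
    · exact Relation.ReflTransGen.refl
    · exact rtg_step m0 m2 h20.symm
  rw [hS] at key
  rw [sum_three hd02 hd03 hd23, sum_three hd02 hd03 hd23] at key
  rw [← hS] at key
  rw [gT, gT0, gT2, gT3, gS, gS0, gS2, gS3] at key
  simp only [hvdef, lift4, bmem, hS, hT] at key
  simp only [Finset.mem_insert, Finset.mem_singleton] at key
  simp only [hd01, hd02, hd03, hd12, hd13, hd23, Ne.symm hd01, Ne.symm hd02, Ne.symm hd03,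
    Ne.symm hd12, Ne.symm hd13, Ne.symm hd23, if_true, if_false, eq_self_iff_true,
    or_true, true_or, or_false, false_or] at key
  norm_num [Fpaw] at key

set_option maxHeartbeats 2000000 in
lemma Dia_cex {p0 p1 p2 p3 : α} (hpat : PatDia G p0 p1 p2 p3) :
    ∃ v : Finset α → ℝ, v ∅ = 0 ∧ AvgConvex v ∧ ¬ AvgConvex (commGame G v) := by
  obtain ⟨h01, h12, h20, h03, h13, n23, hd23⟩ := hpat
  have hd01 : p0 ≠ p1 := h01.ne
  have hd12 : p1 ≠ p2 := h12.ne
  have hd03 : p0 ≠ p3 := h03.ne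
  have hd13 : p1 ≠ p3 := h13.ne
  have hd02 : p0 ≠ p2 := Ne.symm h20.ne
  set v : Finset α → ℝ := lift4 p0 p1 p2 p3 Fcnt with hvdef
  refine ⟨v, lift4_empty (by decide), lift4_avgConvex hd01 hd02 hd03 hd12 hd13 hd23
    (by decide), ?_⟩
  intro hAvg
  set T : Finset α := {p0, p1, p2, p3} with hT
  set S : Finset α := {p0, p2, p3} with hS
  have hSsubT : S ⊆ T := by
    intro x hx; simp only [hS, hT, Finset.mem_insert, Finset.mem_singleton] at hx ⊢; tauto
  have hST : S ⊂ T := hSsubT.ssubset_of_ne (by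
    intro hEq
    have : p1 ∈ S := hEq.symm ▸ (by simp [hT] : p1 ∈ T)
    simp only [hS, Finset.mem_insert, Finset.mem_singleton] at this
    rcases this with h | h | h
    exacts [hd01 h.symm, hd12 h, hd13 h])
  have key := hAvg S T hST
  have m0T : p0 ∈ T := by simp [hT]
  have m1T : p1 ∈ T := by simp [hT]
  have m2T : p2 ∈ T := by simp [hT]
  have m3T : p3 ∈ T := by simp [hT]
  have m0S : p0 ∈ S := by simp [hS]
  have m2S : p2 ∈ S := by simp [hS]
  have m3S : p3 ∈ S := by simp [hS]
  have eT0 : T.erase p0 = {p1, p2, p3} := by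
    rw [hT, Finset.erase_insert (by simp [hd01, hd02, hd03])]
  have eT2 : T.erase p2 = {p0, p1, p3} := by
    rw [hT, Finset.erase_insert_of_ne hd02, Finset.erase_insert_of_ne hd12,
      Finset.erase_insert (by simp [hd23])]
  have eT3 : T.erase p3 = {p0, p1, p2} := by
    rw [hT, Finset.erase_insert_of_ne hd03, Finset.erase_insert_of_ne hd13,
      Finset.erase_insert_of_ne hd23, Finset.erase_singleton]
    simp
  have eS0 : S.erase p0 = {p2, p3} := by
    rw [hS, Finset.erase_insert (by simp [hd02, hd03])]
  have eS2 : S.erase p2 = {p0, p3} := by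
    rw [hS, Finset.erase_insert_of_ne hd02, Finset.erase_insert (by simp [hd23])]
  have eS3 : S.erase p3 = {p0, p2} := by
    rw [hS, Finset.erase_insert_of_ne hd03, Finset.erase_insert_of_ne hd23,
      Finset.erase_singleton]
    simp
  have gT : commGame G v T = v T := by
    refine commGame_eq_single v ⟨p0, m0T⟩ (compOf_all (Finset.Subset.refl T) m0T
      (fun a _ b hb _ => hb) ?_)
    intro b hb
    simp only [hT, Finset.mem_insert, Finset.mem_singleton] at hb
    rcases hb with rfl | rfl | rfl | rfl
    · exact Relation.ReflTransGen.refl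
    · exact rtg_step m0T m1T h01
    · exact rtg_step m0T m2T h20.symm
    · exact rtg_step m0T m3T h03
  have gT0 : commGame G v (T.erase p0) = v {p1, p2, p3} := by
    rw [eT0]
    have m1 : p1 ∈ ({p1, p2, p3} : Finset α) := by simp
    have m2 : p2 ∈ ({p1, p2, p3} : Finset α) := by simp
    have m3 : p3 ∈ ({p1, p2, p3} : Finset α) := by simp
    refine commGame_eq_single v ⟨p1, m1⟩ (compOf_all (Finset.Subset.refl _) m1
      (fun a _ b hb _ => hb) ?_)
    intro b hb
    simp only [Finset.mem_insert, Finset.mem_singleton] at hb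
    rcases hb with rfl | rfl | rfl
    · exact Relation.ReflTransGen.refl
    · exact rtg_step m1 m2 h12
    · exact rtg_step m1 m3 h13
  have gT2 : commGame G v (T.erase p2) = v {p0, p1, p3} := by
    rw [eT2]
    have m0 : p0 ∈ ({p0, p1, p3} : Finset α) := by simp
    have m1 : p1 ∈ ({p0, p1, p3} : Finset α) := by simp
    have m3 : p3 ∈ ({p0, p1, p3} : Finset α) := by simp
    refine commGame_eq_single v ⟨p0, m0⟩ (compOf_all (Finset.Subset.refl _) m0
      (fun a _ b hb _ => hb) ?_)
    intro b hb
    simp only [Finset.mem_insert, Finset.mem_singleton] at hb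
    rcases hb with rfl | rfl | rfl
    · exact Relation.ReflTransGen.refl
    · exact rtg_step m0 m1 h01
    · exact rtg_step m0 m3 h03
  have gT3 : commGame G v (T.erase p3) = v {p0, p1, p2} := by
    rw [eT3]
    have m0 : p0 ∈ ({p0, p1, p2} : Finset α) := by simp
    have m1 : p1 ∈ ({p0, p1, p2} : Finset α) := by simp
    have m2 : p2 ∈ ({p0, p1, p2} : Finset α) := by simp
    refine commGame_eq_single v ⟨p0, m0⟩ (compOf_all (Finset.Subset.refl _) m0
      (fun a _ b hb _ => hb) ?_)
    intro b hb
    simp only [Finset.mem_insert, Finset.mem_singleton] at hb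
    rcases hb with rfl | rfl | rfl
    · exact Relation.ReflTransGen.refl
    · exact rtg_step m0 m1 h01
    · exact rtg_step m0 m2 h20.symm
  have gS : commGame G v S = v S := by
    refine commGame_eq_single v ⟨p0, m0S⟩ (compOf_all (Finset.Subset.refl S) m0S
      (fun a _ b hb _ => hb) ?_)
    intro b hb
    simp only [hS, Finset.mem_insert, Finset.mem_singleton] at hb
    rcases hb with rfl | rfl | rfl
    · exact Relation.ReflTransGen.refl
    · exact rtg_step m0S m2S h20.symm
    · exact rtg_step m0S m3S h03
  have gS0 : commGame G v (S.erase p0) = v {p2} + v {p3} := by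
    rw [eS0]
    have m2 : p2 ∈ ({p2, p3} : Finset α) := by simp
    have m3 : p3 ∈ ({p2, p3} : Finset α) := by simp
    refine commGame_eq_pair v ⟨p2, Finset.mem_singleton_self p2⟩
      ⟨p3, Finset.mem_singleton_self p3⟩ (by simp [Finset.disjoint_left, hd23])
      (by ext x; simp only [Finset.mem_insert, Finset.mem_singleton, Finset.mem_union]; try tauto)
      (comp_singleton m2 ?_) (comp_singleton m3 ?_)
    · intro b hb hadj
      simp only [Finset.mem_insert, Finset.mem_singleton] at hb
      rcases hb with rfl | rfl
      exacts [G.irrefl hadj, n23 hadj]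
    · intro b hb hadj
      simp only [Finset.mem_insert, Finset.mem_singleton] at hb
      rcases hb with rfl | rfl
      exacts [absurd hadj.symm n23, G.irrefl hadj]
  have gS2 : commGame G v (S.erase p2) = v {p0, p3} := by
    rw [eS2]
    have m0 : p0 ∈ ({p0, p3} : Finset α) := by simp
    have m3 : p3 ∈ ({p0, p3} : Finset α) := by simp
    refine commGame_eq_single v ⟨p0, m0⟩ (compOf_all (Finset.Subset.refl _) m0
      (fun a _ b hb _ => hb) ?_)
    intro b hb
    simp only [Finset.mem_insert, Finset.mem_singleton] at hb
    rcases hb with rfl | rfl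
    · exact Relation.ReflTransGen.refl
    · exact rtg_step m0 m3 h03
  have gS3 : commGame G v (S.erase p3) = v {p0, p2} := by
    rw [eS3]
    have m0 : p0 ∈ ({p0, p2} : Finset α) := by simp
    have m2 : p2 ∈ ({p0, p2} : Finset α) := by simp
    refine commGame_eq_single v ⟨p0, m0⟩ (compOf_all (Finset.Subset.refl _) m0
      (fun a _ b hb _ => hb) ?_)
    intro b hb
    simp only [Finset.mem_insert, Finset.mem_singleton] at hb
    rcases hb with rfl | rfl
    · exact Relation.ReflTransGen.refl
    · exact rtg_step m0 m2 h20.symm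
  rw [hS] at key
  rw [sum_three hd02 hd03 hd23, sum_three hd02 hd03 hd23] at key
  rw [← hS] at key
  rw [gT, gT0, gT2, gT3, gS, gS0, gS2, gS3] at key
  simp only [hvdef, lift4, bmem, hS, hT] at key
  simp only [Finset.mem_insert, Finset.mem_singleton] at key
  simp only [hd01, hd02, hd03, hd12, hd13, hd23, Ne.symm hd01, Ne.symm hd02, Ne.symm hd03,
    Ne.symm hd12, Ne.symm hd13, Ne.symm hd23, if_true, if_false, eq_self_iff_true,
    or_true, true_or, or_false, false_or] at key
  norm_num [Fcnt] at key
end Cex3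
/-- For a connected graph `G`, preserving average convexity is equivalent to preserving
`(ω,Σ)`-convexity for every weight system with the trivial ordered partition `Σ = (N)`
(all priorities equal to `1`). -/
theorem preserves_avgConvex_iff_preserves_all_trivial_weight_systems
    [Fintype α] [DecidableEq α] (G : SimpleGraph α) (hG : G.Connected) :
    (∀ v : Finset α → ℝ, v ∅ = 0 → AvgConvex v → AvgConvex (commGame G v)) ↔
      (∀ ω : α → ℝ, (∀ i, 0 < ω i) → Preserves G ω (fun _ => 1)) := by
  constructor
  · intro hAC ω hω
    rcases dichotomy hG with hcomp | ⟨c, hstar⟩ | hbad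
    · intro v hv0 hW
      rw [commGame_complete hcomp v hv0]
      exact hW
    · exact star_preserves hstar hω
    · exfalso
      obtain ⟨v, hv0, hvac, hnot⟩ :
          ∃ v : Finset α → ℝ, v ∅ = 0 ∧ AvgConvex v ∧ ¬ AvgConvex (commGame G v) := by
        rcases hbad with ⟨p0, p1, p2, p3, hp⟩ | ⟨p0, p1, p2, p3, hp⟩ |
          ⟨p0, p1, p2, p3, hp⟩ | ⟨p0, p1, p2, p3, hp⟩
        exacts [P4_cex hp, C4_cex hp, Paw_cex hp, Dia_cex hp]
      exact hnot (hAC v hv0 hvac)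
  · intro h v hv0 hAvg
    have := h (fun _ => 1) (fun _ => one_pos) v hv0 ((avgConvex_iff_wConvex_one v).mp hAvg)
    exact (avgConvex_iff_wConvex_one _).mpr this

end
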